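/- Let G_{x,y} be the multiset consisting of a balanced quasi-arc of weight x in PG(2,q) in which each of the three fundamental points appears with multiplicity y ≥ 1 (so n = 3x+3y). Then the number α_F(G_{x,y}, s) of s-element sub-multisets whose span contains a fixed fundamental point satisfies: α_F(G_{x,y},1) = y; α_F(G_{x,y},2) = 2(xy + C(x,2)) + y(3x+2y) + y(y−1)/2; α_F(G_{x,y},s) = C(3x+3y,s) − C(x+2y,s) − 2·C(y,s−1)·x for 3 ≤ s ≤ x+2y; and α_F(G_{x,y},s) = C(3x+3y,s) for x+2y < s ≤ 3x+3y−1. -/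
import Mathlib


open scoped Classical

structure IsBalancedQuasiArc (F : Type*) [Field F] (x : ℕ)
    (E1 E2 E3 : Projectivization F (Fin 3 → F))
    (G1 G2 G3 : Finset (Projectivization F (Fin 3 → F))) : Prop where
  not_collinear : ¬ ∃ W : Submodule F (Fin 3 → F), Module.finrank F W ≤ 2 ∧
      E1.submodule ≤ W ∧ E2.submodule ≤ W ∧ E3.submodule ≤ W
  card_G1 : G1.card = x
  card_G2 : G2.card = x
  card_G3 : G3.card = x
  sub_G1 : ∀ P ∈ G1, Projectivization.submodule P ≤ E1.submodule ⊔ E2.submodule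
  sub_G2 : ∀ P ∈ G2, Projectivization.submodule P ≤ E2.submodule ⊔ E3.submodule
  sub_G3 : ∀ P ∈ G3, Projectivization.submodule P ≤ E3.submodule ⊔ E1.submodule
  card_total : ({E1, E2, E3} ∪ G1 ∪ G2 ∪ G3 : Finset _).card = 3 * x + 3
  secant : ∀ W : Submodule F (Fin 3 → F), Module.finrank F W = 2 →
      W ≠ E1.submodule ⊔ E2.submodule → W ≠ E2.submodule ⊔ E3.submodule →
      W ≠ E3.submodule ⊔ E1.submodule →
      (({E1, E2, E3} ∪ G1 ∪ G2 ∪ G3 : Finset _).filter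
        fun P => Projectivization.submodule P ≤ W).card ≤ 2

/-- For an indexed family (multiset) of projective points `P`, the number of
`s`-element sub-multisets (i.e. `s`-subsets of the index set) whose projective
span contains the point `E`. -/
noncomputable def alphaFam {ι : Type*} [Fintype ι] {F : Type*} [Field F]
    (P : ι → Projectivization F (Fin 3 → F))
    (E : Projectivization F (Fin 3 → F)) (s : ℕ) : ℕ :=
  ((Finset.univ.powersetCard s).filter fun S : Finset ι =>
    E.submodule ≤ ⨆ i ∈ S, Projectivization.submodule (P i)).card

open Finset Module

section Aux
variable {F : Type*} [Field F]

abbrev Pt (F : Type*) [Field F] := Projectivization F (Fin 3 → F)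

lemma pt_le_pt {p q : Pt F} (h : p.submodule ≤ q.submodule) : p = q :=
  Projectivization.submodule_injective (Submodule.eq_of_le_of_finrank_le h
    (by rw [p.finrank_submodule, q.finrank_submodule]))

lemma sup_le_two (p q : Pt F) : finrank F ↥(p.submodule ⊔ q.submodule) ≤ 2 := by
  have := Submodule.finrank_sup_add_finrank_inf_eq p.submodule q.submodule
  have h1 := p.finrank_submodule
  have h2 := q.finrank_submodule
  omega

lemma sup_rank_two {p q : Pt F} (h : p ≠ q) :
    finrank F ↥(p.submodule ⊔ q.submodule) = 2 := by
  rcases Nat.lt_or_ge (finrank F ↥(p.submodule ⊔ q.submodule)) 2 with h2 | h2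
  · exfalso
    have hp : p.submodule = p.submodule ⊔ q.submodule :=
      Submodule.eq_of_le_of_finrank_le le_sup_left (by rw [p.finrank_submodule]; omega)
    have hq : q.submodule = p.submodule ⊔ q.submodule :=
      Submodule.eq_of_le_of_finrank_le le_sup_right (by rw [q.finrank_submodule]; omega)
    exact h (pt_le_pt (hp.trans hq.symm).le)
  · exact le_antisymm (sup_le_two p q) h2

lemma span_eq_line {p q : Pt F} (hpq : p ≠ q) {W : Submodule F (Fin 3 → F)}
    (hW : finrank F W = 2) (hp : p.submodule ≤ W) (hq : q.submodule ≤ W) :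
    p.submodule ⊔ q.submodule = W :=
  Submodule.eq_of_le_of_finrank_le (sup_le hp hq) (by rw [hW, sup_rank_two hpq])

lemma pt_on_two_lines {W1 W2 : Submodule F (Fin 3 → F)} {E : Pt F}
    (h1 : finrank F W1 = 2) (h2 : finrank F W2 = 2) (hne : W1 ≠ W2)
    (hE1 : E.submodule ≤ W1) (hE2 : E.submodule ≤ W2)
    {p : Pt F} (hp1 : p.submodule ≤ W1) (hp2 : p.submodule ≤ W2) : p = E := by
  have hinf : finrank F ↥(W1 ⊓ W2) ≤ 1 := by
    by_contra hc
    push_neg at hc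
    have e1 : W1 ⊓ W2 = W1 :=
      Submodule.eq_of_le_of_finrank_le inf_le_left (by omega)
    have e2 : W1 ⊓ W2 = W2 :=
      Submodule.eq_of_le_of_finrank_le inf_le_right (by omega)
    exact hne (e1.symm.trans e2)
  have hEeq : E.submodule = W1 ⊓ W2 :=
    Submodule.eq_of_le_of_finrank_le (le_inf hE1 hE2) (by rw [E.finrank_submodule]; omega)
  exact pt_le_pt (by rw [hEeq]; exact le_inf hp1 hp2)

lemma choose2_add (a b : ℕ) : (a + b).choose 2 = a.choose 2 + a * b + b.choose 2 := by
  induction b with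
  | zero => simp
  | succ b ih =>
    have h1 : a + (b+1) = (a+b) + 1 := by ring
    have h2 : ∀ m : ℕ, (m+1).choose 2 = m.choose 2 + m := by
      intro m
      rw [Nat.choose_succ_succ]
      simp [Nat.choose_one_right, Nat.add_comm]
    rw [h1, h2, ih, h2 b]
    ring

lemma count_final {a b c n x' : ℕ} (key : a + (b + x' * c + x' * c) = n) :
    a = n - b - 2 * c * x' := by
  have h : 2 * c * x' = x' * c + x' * c := by ring
  rw [h]
  generalize x' * c = m at key ⊢
  omega

end Aux

set_option maxHeartbeats 1000000000 in
theorem mainE1 {F : Type*} [Field F] {x y : ℕ} (hy : 1 ≤ y)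
    {E1 E2 E3 : Projectivization F (Fin 3 → F)}
    {G1 G2 G3 : Finset (Projectivization F (Fin 3 → F))}
    (h : IsBalancedQuasiArc F x E1 E2 E3 G1 G2 G3)
    (P : Fin (3 * x + 3 * y) → Projectivization F (Fin 3 → F))
    (hmultF : ∀ E ∈ ({E1, E2, E3} : Finset (Projectivization F (Fin 3 → F))),
      (Finset.univ.filter fun i => P i = E).card = y)
    (hmultN : ∀ Q ∈ G1 ∪ G2 ∪ G3,
      (Finset.univ.filter fun i => P i = Q).card = 1)
    (hrange : ∀ i, P i ∈ ({E1, E2, E3} ∪ G1 ∪ G2 ∪ G3 : Finset _)) :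
    alphaFam P E1 1 = y ∧
    alphaFam P E1 2 =
      2 * (x * y + x.choose 2) + y * (3 * x + 2 * y) + y * (y - 1) / 2 ∧
    (∀ s, 3 ≤ s → s ≤ x + 2 * y →
      alphaFam P E1 s =
        (3 * x + 3 * y).choose s - (x + 2 * y).choose s - 2 * y.choose (s - 1) * x) ∧
    (∀ s, x + 2 * y < s → s ≤ 3 * x + 3 * y - 1 →
      alphaFam P E1 s = (3 * x + 3 * y).choose s) := by
  classical
  -- 1. distinctness and disjointness
  have h3 : ({E1,E2,E3} : Finset (Pt F)).card ≤ 3 := by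
    apply le_trans (Finset.card_insert_le _ _)
    have := Finset.card_insert_le E2 ({E3} : Finset (Pt F))
    simp at this ⊢
    omega
  have u1 : (({E1,E2,E3} ∪ G1 : Finset (Pt F))).card ≤ ({E1,E2,E3} : Finset (Pt F)).card + x :=
    le_trans (Finset.card_union_le _ _) (by rw [h.card_G1])
  have u2 : (({E1,E2,E3} ∪ G1 ∪ G2 : Finset (Pt F))).card ≤
      ({E1,E2,E3} ∪ G1 : Finset (Pt F)).card + x :=
    le_trans (Finset.card_union_le _ _) (by rw [h.card_G2])
  have u3 : (({E1,E2,E3} ∪ G1 ∪ G2 ∪ G3 : Finset (Pt F))).card ≤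
      ({E1,E2,E3} ∪ G1 ∪ G2 : Finset (Pt F)).card + x :=
    le_trans (Finset.card_union_le _ _) (by rw [h.card_G3])
  have hct := h.card_total
  have e3 : ({E1,E2,E3} : Finset (Pt F)).card = 3 := by omega
  have d1 : Disjoint ({E1,E2,E3} : Finset (Pt F)) G1 :=
    Finset.card_union_eq_card_add_card.mp (by rw [h.card_G1]; omega)
  have d2 : Disjoint ({E1,E2,E3} ∪ G1 : Finset (Pt F)) G2 :=
    Finset.card_union_eq_card_add_card.mp (by rw [h.card_G2]; omega)
  have d3 : Disjoint ({E1,E2,E3} ∪ G1 ∪ G2 : Finset (Pt F)) G3 :=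
    Finset.card_union_eq_card_add_card.mp (by rw [h.card_G3]; omega)
  have hfund : ∀ q : Pt F, q ∈ ({E1,E2,E3} : Finset (Pt F)) → q ∉ G1 ∧ q ∉ G2 ∧ q ∉ G3 := by
    intro q hq
    exact ⟨Finset.disjoint_left.mp d1 hq,
      Finset.disjoint_left.mp d2 (by simp [Finset.mem_union]; simp at hq; tauto),
      Finset.disjoint_left.mp d3 (by simp [Finset.mem_union]; simp at hq; tauto)⟩
  have hE1G1 : E1 ∉ G1 := (hfund E1 (by simp)).1
  have hE1G2 : E1 ∉ G2 := (hfund E1 (by simp)).2.1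
  have hE1G3 : E1 ∉ G3 := (hfund E1 (by simp)).2.2
  have hE2G1 : E2 ∉ G1 := (hfund E2 (by simp)).1
  have hE2G2 : E2 ∉ G2 := (hfund E2 (by simp)).2.1
  have hE2G3 : E2 ∉ G3 := (hfund E2 (by simp)).2.2
  have hE3G1 : E3 ∉ G1 := (hfund E3 (by simp)).1
  have hE3G2 : E3 ∉ G2 := (hfund E3 (by simp)).2.1
  have hE3G3 : E3 ∉ G3 := (hfund E3 (by simp)).2.2
  have dG12 : ∀ q ∈ G1, q ∉ G2 := fun q hq =>
    Finset.disjoint_left.mp d2 (by simp [Finset.mem_union, hq])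
  have dG13 : ∀ q ∈ G1, q ∉ G3 := fun q hq =>
    Finset.disjoint_left.mp d3 (by simp [Finset.mem_union, hq])
  have dG23 : ∀ q ∈ G2, q ∉ G3 := fun q hq =>
    Finset.disjoint_left.mp d3 (by simp [Finset.mem_union, hq])
  have hcard_pair : ∀ a b : Pt F, ({a,b} : Finset (Pt F)).card ≤ 2 := by
    intro a b
    have := Finset.card_insert_le a ({b} : Finset (Pt F)); simp at this; omega
  have hn12 : E1 ≠ E2 := by
    intro he; rw [he] at e3
    rw [show ({E2,E2,E3} : Finset (Pt F)) = {E2,E3} by ext q; simp] at e3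
    have := hcard_pair E2 E3; omega
  have hn13 : E1 ≠ E3 := by
    intro he; rw [he] at e3
    rw [show ({E3,E2,E3} : Finset (Pt F)) = {E2,E3} by ext q; simp only [Finset.mem_insert, Finset.mem_singleton]; tauto] at e3
    have := hcard_pair E2 E3; omega
  have hn23 : E2 ≠ E3 := by
    intro he; rw [he] at e3
    rw [show ({E1,E3,E3} : Finset (Pt F)) = {E1,E3} by ext q; simp] at e3
    have := hcard_pair E1 E3; omega
  -- 2. geometry
  have hline12 : finrank F ↥(E1.submodule ⊔ E2.submodule) = 2 := sup_rank_two hn12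
  have hline23 : finrank F ↥(E2.submodule ⊔ E3.submodule) = 2 := sup_rank_two hn23
  have hline31 : finrank F ↥(E3.submodule ⊔ E1.submodule) = 2 := sup_rank_two hn13.symm
  have hnc := h.not_collinear
  have hnotmid : ¬ E1.submodule ≤ E2.submodule ⊔ E3.submodule := fun hle =>
    hnc ⟨E2.submodule ⊔ E3.submodule, le_trans hline23.le (by norm_num), hle,
      le_sup_left, le_sup_right⟩
  have hnot3on12 : ¬ E3.submodule ≤ E1.submodule ⊔ E2.submodule := fun hle =>
    hnc ⟨E1.submodule ⊔ E2.submodule, hline12.le, le_sup_left, le_sup_right, hle⟩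
  have hnot2on31 : ¬ E2.submodule ≤ E3.submodule ⊔ E1.submodule := fun hle =>
    hnc ⟨E3.submodule ⊔ E1.submodule, hline31.le, le_sup_right, hle, le_sup_left⟩
  have hl12_23 : E1.submodule ⊔ E2.submodule ≠ E2.submodule ⊔ E3.submodule := fun he =>
    hnc ⟨E1.submodule ⊔ E2.submodule, hline12.le, le_sup_left, le_sup_right,
      he ▸ le_sup_right⟩
  have hl12_31 : E1.submodule ⊔ E2.submodule ≠ E3.submodule ⊔ E1.submodule := fun he =>
    hnc ⟨E1.submodule ⊔ E2.submodule, hline12.le, le_sup_left, le_sup_right,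
      he ▸ le_sup_left⟩
  have hl23_31 : E2.submodule ⊔ E3.submodule ≠ E3.submodule ⊔ E1.submodule := fun he =>
    hnc ⟨E2.submodule ⊔ E3.submodule, hline23.le, he ▸ le_sup_right, le_sup_left,
      le_sup_right⟩
  -- membership of configuration points on the fundamental lines
  have hmemOm : ∀ i, P i = E1 ∨ P i = E2 ∨ P i = E3 ∨ P i ∈ G1 ∨ P i ∈ G2 ∨ P i ∈ G3 := by
    intro i
    have := hrange i
    simp [Finset.mem_union, Finset.mem_insert] at this
    tauto
  have hon12 : ∀ i, (P i).submodule ≤ E1.submodule ⊔ E2.submodule →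
      P i = E1 ∨ P i = E2 ∨ P i ∈ G1 := by
    intro i hle
    rcases hmemOm i with h' | h' | h' | h' | h' | h'
    · exact Or.inl h'
    · exact Or.inr (Or.inl h')
    · exact absurd (h' ▸ hle) hnot3on12
    · exact Or.inr (Or.inr h')
    · exfalso
      have := pt_on_two_lines hline12 hline23 hl12_23 le_sup_right le_sup_left hle
        (h.sub_G2 _ h')
      exact hE2G2 (this ▸ h')
    · exfalso
      have := pt_on_two_lines hline12 hline31 hl12_31 le_sup_left le_sup_right hle
        (h.sub_G3 _ h')
      exact hE1G3 (this ▸ h')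
  have hon23 : ∀ i, (P i).submodule ≤ E2.submodule ⊔ E3.submodule →
      P i = E2 ∨ P i = E3 ∨ P i ∈ G2 := by
    intro i hle
    rcases hmemOm i with h' | h' | h' | h' | h' | h'
    · exact absurd (h' ▸ hle) hnotmid
    · exact Or.inl h'
    · exact Or.inr (Or.inl h')
    · exfalso
      have := pt_on_two_lines hline23 hline12 hl12_23.symm le_sup_left le_sup_right hle
        (h.sub_G1 _ h')
      exact hE2G1 (this ▸ h')
    · exact Or.inr (Or.inr h')
    · exfalso
      have := pt_on_two_lines hline23 hline31 hl23_31 le_sup_right le_sup_left hle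
        (h.sub_G3 _ h')
      exact hE3G3 (this ▸ h')
  have hon31 : ∀ i, (P i).submodule ≤ E3.submodule ⊔ E1.submodule →
      P i = E3 ∨ P i = E1 ∨ P i ∈ G3 := by
    intro i hle
    rcases hmemOm i with h' | h' | h' | h' | h' | h'
    · exact Or.inr (Or.inl h')
    · exact absurd (h' ▸ hle) hnot2on31
    · exact Or.inl h'
    · exfalso
      have := pt_on_two_lines hline31 hline12 hl12_31.symm le_sup_right le_sup_left hle
        (h.sub_G1 _ h')
      exact hE1G1 (this ▸ h')
    · exfalso
      have := pt_on_two_lines hline31 hline23 hl23_31.symm le_sup_left le_sup_right hle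
        (h.sub_G2 _ h')
      exact hE3G2 (this ▸ h')
    · exact Or.inr (Or.inr h')
  -- 3. index sets
  have cI1 : (Finset.univ.filter fun i => P i = E1).card = y := hmultF E1 (by simp)
  have cI2 : (Finset.univ.filter fun i => P i = E2).card = y := hmultF E2 (by simp)
  have cI3 : (Finset.univ.filter fun i => P i = E3).card = y := hmultF E3 (by simp)
  have hdisjidx : ∀ Q Q' : Pt F, Q ≠ Q' →
      Disjoint (Finset.univ.filter fun i => P i = Q) (Finset.univ.filter fun i => P i = Q') := by
    intro Q Q' hne
    rw [Finset.disjoint_left]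
    intro i hi hi'
    simp only [Finset.mem_filter] at hi hi'
    exact hne (hi.2 ▸ hi'.2 ▸ rfl)
  have cGidx : ∀ G : Finset (Pt F), G ⊆ G1 ∪ G2 ∪ G3 →
      (G.biUnion (fun Q => Finset.univ.filter fun i => P i = Q)).card = G.card := by
    intro G hG
    rw [Finset.card_biUnion (fun Q _ Q' _ hne => hdisjidx Q Q' hne)]
    rw [Finset.sum_congr rfl (fun Q hQ => hmultN Q (hG hQ))]
    simp
  have hLmem : ∀ i, ((P i).submodule ≤ E2.submodule ⊔ E3.submodule) ↔
      (P i = E2 ∨ P i = E3 ∨ P i ∈ G2) := by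
    intro i
    constructor
    · exact hon23 i
    · rintro (h' | h' | h')
      · rw [h']; exact le_sup_left
      · rw [h']; exact le_sup_right
      · exact h.sub_G2 _ h'
  have cL : (Finset.univ.filter fun i =>
      (P i).submodule ≤ E2.submodule ⊔ E3.submodule).card = x + 2*y := by
    have hdec : (Finset.univ.filter fun i =>
        (P i).submodule ≤ E2.submodule ⊔ E3.submodule) =
        ((Finset.univ.filter fun i => P i = E2) ∪ (Finset.univ.filter fun i => P i = E3)) ∪
        (G2.biUnion (fun Q => Finset.univ.filter fun i => P i = Q)) := by
      ext i
      simp only [Finset.mem_filter, Finset.mem_union, Finset.mem_biUnion, Finset.mem_univ,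
        true_and]
      rw [hLmem i]
      constructor
      · rintro (h' | h' | h')
        · exact Or.inl (Or.inl h')
        · exact Or.inl (Or.inr h')
        · exact Or.inr ⟨P i, h', rfl⟩
      · rintro ((h' | h') | ⟨Q, hQ, h'⟩)
        · exact Or.inl h'
        · exact Or.inr (Or.inl h')
        · exact Or.inr (Or.inr (h' ▸ hQ))
    rw [hdec, Finset.card_union_of_disjoint, Finset.card_union_of_disjoint
      (hdisjidx E2 E3 hn23), cI2, cI3, cGidx G2 (fun q hq => by simp [Finset.mem_union, hq]),
      h.card_G2]
    · omega
    · rw [Finset.disjoint_left]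
      intro i hi hi'
      simp only [Finset.mem_union, Finset.mem_filter, Finset.mem_biUnion, Finset.mem_univ,
        true_and] at hi hi'
      obtain ⟨Q, hQ, hPQ⟩ := hi'
      rcases hi with h' | h'
      · exact hE2G2 (h' ▸ hPQ ▸ hQ)
      · exact hE3G2 (h' ▸ hPQ ▸ hQ)
  have hK12mem : ∀ i, ((P i).submodule ≤ E1.submodule ⊔ E2.submodule ∧ P i ≠ E1) ↔
      (P i = E2 ∨ P i ∈ G1) := by
    intro i
    constructor
    · rintro ⟨hle, hne⟩
      rcases hon12 i hle with h' | h' | h'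
      · exact absurd h' hne
      · exact Or.inl h'
      · exact Or.inr h'
    · rintro (h' | h')
      · rw [h']; exact ⟨le_sup_right, fun he => hn12 he.symm⟩
      · refine ⟨h.sub_G1 _ h', fun he => hE1G1 (he ▸ h')⟩
  have hK31mem : ∀ i, ((P i).submodule ≤ E3.submodule ⊔ E1.submodule ∧ P i ≠ E1) ↔
      (P i = E3 ∨ P i ∈ G3) := by
    intro i
    constructor
    · rintro ⟨hle, hne⟩
      rcases hon31 i hle with h' | h' | h'
      · exact Or.inl h'
      · exact absurd h' hne
      · exact Or.inr h'
    · rintro (h' | h')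
      · rw [h']; exact ⟨le_sup_left, fun he => hn13 he.symm⟩
      · refine ⟨h.sub_G3 _ h', fun he => hE1G3 (he ▸ h')⟩
  have cK : ∀ (Pred : Fin (3*x+3*y) → Prop) [DecidablePred Pred] (E' : Pt F) (G' : Finset (Pt F)),
      (Finset.univ.filter fun i => P i = E').card = y → E' ∉ G' →
      G' ⊆ G1 ∪ G2 ∪ G3 → G'.card = x →
      (∀ i, Pred i ↔ (P i = E' ∨ P i ∈ G')) →
      (Finset.univ.filter fun i => Pred i).card = y + x := by
    intro Pred instP E' G' cE' hEG' hsub cG' hiff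
    have hdec : (Finset.univ.filter fun i => Pred i) =
        (Finset.univ.filter fun i => P i = E') ∪
        (G'.biUnion (fun Q => Finset.univ.filter fun i => P i = Q)) := by
      ext i
      simp only [Finset.mem_filter, Finset.mem_union, Finset.mem_biUnion, Finset.mem_univ,
        true_and]
      rw [hiff i]
      constructor
      · rintro (h' | h')
        · exact Or.inl h'
        · exact Or.inr ⟨P i, h', rfl⟩
      · rintro (h' | ⟨Q, hQ, h'⟩)
        · exact Or.inl h'
        · exact Or.inr (h' ▸ hQ)
    rw [hdec, Finset.card_union_of_disjoint, cE', cGidx G' hsub, cG']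
    rw [Finset.disjoint_left]
    intro i hi hi'
    simp only [Finset.mem_filter, Finset.mem_biUnion, Finset.mem_univ, true_and] at hi hi'
    obtain ⟨Q, hQ, hPQ⟩ := hi'
    exact hEG' (hi ▸ hPQ ▸ hQ)
  have cK12 : (Finset.univ.filter fun i =>
      (P i).submodule ≤ E1.submodule ⊔ E2.submodule ∧ P i ≠ E1).card = y + x :=
    cK _ E2 G1 cI2 hE2G1 (fun q hq => by simp [Finset.mem_union, hq]) h.card_G1 hK12mem
  have cK31 : (Finset.univ.filter fun i =>
      (P i).submodule ≤ E3.submodule ⊔ E1.submodule ∧ P i ≠ E1).card = y + x :=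
    cK _ E3 G3 cI3 hE3G3 (fun q hq => by simp [Finset.mem_union, hq]) h.card_G3 hK31mem
  -- 4. span helpers
  have hspan_le : ∀ (S : Finset (Fin (3*x+3*y))) (W : Submodule F (Fin 3 → F)),
      (∀ i ∈ S, (P i).submodule ≤ W) → (⨆ i ∈ S, (P i).submodule) ≤ W :=
    fun S W hW => iSup_le fun i => iSup_le fun hi => hW i hi
  have hle_span : ∀ (S : Finset (Fin (3*x+3*y))) (i : Fin (3*x+3*y)), i ∈ S →
      (P i).submodule ≤ ⨆ i ∈ S, (P i).submodule :=
    fun S i hi => le_iSup₂ (f := fun i _ => (P i).submodule) i hi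
  have hpair : ∀ i j : Fin (3*x+3*y), (⨆ k ∈ ({i,j} : Finset (Fin (3*x+3*y))),
      (P k).submodule) = (P i).submodule ⊔ (P j).submodule := by
    intro i j
    rw [Finset.iSup_insert, Finset.iSup_singleton]
  -- 5. characterizations
  have char1 : ∀ i : Fin (3*x+3*y),
      (E1.submodule ≤ ⨆ k ∈ ({i} : Finset (Fin (3*x+3*y))), (P k).submodule) ↔ P i = E1 := by
    intro i
    rw [Finset.iSup_singleton]
    exact ⟨fun hle => (pt_le_pt hle).symm, fun he => he ▸ le_rfl⟩
  have char2 : ∀ S : Finset (Fin (3*x+3*y)), S.card = 2 →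
      ((E1.submodule ≤ ⨆ i ∈ S, (P i).submodule) ↔
        ((∃ i ∈ S, P i = E1) ∨
         (S ⊆ Finset.univ.filter (fun i =>
            (P i).submodule ≤ E1.submodule ⊔ E2.submodule ∧ P i ≠ E1) ∧
          ¬ S ⊆ Finset.univ.filter (fun i => P i = E2)) ∨
         (S ⊆ Finset.univ.filter (fun i =>
            (P i).submodule ≤ E3.submodule ⊔ E1.submodule ∧ P i ≠ E1) ∧
          ¬ S ⊆ Finset.univ.filter (fun i => P i = E3)))) := by
    intro S hS
    obtain ⟨i, j, hij, rfl⟩ := Finset.card_eq_two.mp hS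
    rw [hpair i j]
    have hsame : ∀ Q : Pt F, Q ∈ G1 ∪ G2 ∪ G3 → P i = Q → P j = Q → False := by
      intro Q hQ hi hj
      have hsub : ({i,j} : Finset (Fin (3*x+3*y))) ⊆
          Finset.univ.filter (fun k => P k = Q) := by
        intro k hk
        simp only [Finset.mem_insert, Finset.mem_singleton] at hk
        rcases hk with rfl | rfl
        · simp [hi]
        · simp [hj]
      have hc2 : ({i,j} : Finset (Fin (3*x+3*y))).card = 2 := by
        rw [Finset.card_insert_of_notMem (by simp [hij]), Finset.card_singleton]
      have := Finset.card_le_card hsub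
      rw [hc2, hmultN Q hQ] at this
      omega
    constructor
    · intro hle
      by_cases hi1 : P i = E1
      · exact Or.inl ⟨i, by simp, hi1⟩
      by_cases hj1 : P j = E1
      · exact Or.inl ⟨j, by simp, hj1⟩
      have hne : P i ≠ P j := by
        intro he
        rw [he, sup_idem] at hle
        exact hj1 (pt_le_pt hle).symm
      have hrk : finrank F ↥((P i).submodule ⊔ (P j).submodule) = 2 := sup_rank_two hne
      have hWcases : (P i).submodule ⊔ (P j).submodule = E1.submodule ⊔ E2.submodule ∨
          (P i).submodule ⊔ (P j).submodule = E2.submodule ⊔ E3.submodule ∨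
          (P i).submodule ⊔ (P j).submodule = E3.submodule ⊔ E1.submodule := by
        by_contra hc
        push_neg at hc
        have hsec := h.secant _ hrk hc.1 hc.2.1 hc.2.2
        have hsub3 : ({E1, P i, P j} : Finset (Pt F)) ⊆
            (({E1,E2,E3} ∪ G1 ∪ G2 ∪ G3 : Finset (Pt F)).filter
              fun Q => Q.submodule ≤ (P i).submodule ⊔ (P j).submodule) := by
          intro q hq
          simp only [Finset.mem_insert, Finset.mem_singleton] at hq
          rcases hq with rfl | rfl | rfl
          · exact Finset.mem_filter.mpr ⟨by simp, hle⟩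
          · exact Finset.mem_filter.mpr ⟨hrange i, le_sup_left⟩
          · exact Finset.mem_filter.mpr ⟨hrange j, le_sup_right⟩
        have hc3 : ({E1, P i, P j} : Finset (Pt F)).card = 3 := by
          rw [Finset.card_insert_of_notMem, Finset.card_insert_of_notMem, Finset.card_singleton]
          · simpa using hne
          · simp only [Finset.mem_insert, Finset.mem_singleton]
            push_neg
            exact ⟨fun he => hi1 he.symm, fun he => hj1 he.symm⟩
        have h1 := Finset.card_le_card hsub3
        rw [hc3] at h1
        exact absurd (le_trans h1 hsec) (by norm_num)
      rcases hWcases with hW | hW | hW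
      · right; left
        constructor
        · intro k hk
          simp only [Finset.mem_insert, Finset.mem_singleton] at hk
          rcases hk with rfl | rfl
          · exact Finset.mem_filter.mpr ⟨Finset.mem_univ _, by rw [← hW]; exact le_sup_left, hi1⟩
          · exact Finset.mem_filter.mpr ⟨Finset.mem_univ _, by rw [← hW]; exact le_sup_right, hj1⟩
        · intro hsubI2
          have hi2 : P i = E2 := by
            have := hsubI2 (show i ∈ _ by simp)
            simpa using this
          have hj2 : P j = E2 := by
            have := hsubI2 (show j ∈ _ by simp)
            simpa using this
          exact hne (hi2.trans hj2.symm)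
      · exact absurd (hW ▸ hle) hnotmid
      · right; right
        constructor
        · intro k hk
          simp only [Finset.mem_insert, Finset.mem_singleton] at hk
          rcases hk with rfl | rfl
          · exact Finset.mem_filter.mpr ⟨Finset.mem_univ _, by rw [← hW]; exact le_sup_left, hi1⟩
          · exact Finset.mem_filter.mpr ⟨Finset.mem_univ _, by rw [← hW]; exact le_sup_right, hj1⟩
        · intro hsubI3
          have hi2 : P i = E3 := by
            have := hsubI3 (show i ∈ _ by simp)
            simpa using this
          have hj2 : P j = E3 := by
            have := hsubI3 (show j ∈ _ by simp)
            simpa using this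
          exact hne (hi2.trans hj2.symm)
    · rintro (⟨i', hi'S, hi'⟩ | ⟨hK, hnI⟩ | ⟨hK, hnI⟩)
      · simp only [Finset.mem_insert, Finset.mem_singleton] at hi'S
        rcases hi'S with rfl | rfl
        · exact hi' ▸ le_sup_left
        · exact hi' ▸ le_sup_right
      · have hiK := (Finset.mem_filter.mp (hK (show i ∈ _ by simp))).2
        have hjK := (Finset.mem_filter.mp (hK (show j ∈ _ by simp))).2
        have hne : P i ≠ P j := by
          intro he
          rcases hon12 i hiK.1 with h' | h' | h'
          · exact hiK.2 h'
          · apply hnI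
            intro k hk
            simp only [Finset.mem_insert, Finset.mem_singleton] at hk
            rcases hk with rfl | rfl
            · simp [h']
            · simp [← he, h']
          · exact hsame (P i) (by simp [Finset.mem_union, h']) rfl he.symm
        have hsp := span_eq_line hne hline12 hiK.1 hjK.1
        rw [hsp]
        exact le_sup_left
      · have hiK := (Finset.mem_filter.mp (hK (show i ∈ _ by simp))).2
        have hjK := (Finset.mem_filter.mp (hK (show j ∈ _ by simp))).2
        have hne : P i ≠ P j := by
          intro he
          rcases hon31 i hiK.1 with h' | h' | h'
          · apply hnI
            intro k hk
            simp only [Finset.mem_insert, Finset.mem_singleton] at hk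
            rcases hk with rfl | rfl
            · simp [h']
            · simp [← he, h']
          · exact hiK.2 h'
          · exact hsame (P i) (by simp [Finset.mem_union, h']) rfl he.symm
        have hsp := span_eq_line hne hline31 hiK.1 hjK.1
        rw [hsp]
        exact le_sup_right
  have charBig : ∀ S : Finset (Fin (3*x+3*y)), 3 ≤ S.card →
      ((¬ E1.submodule ≤ ⨆ i ∈ S, (P i).submodule) ↔
        (S ⊆ Finset.univ.filter (fun i => (P i).submodule ≤ E2.submodule ⊔ E3.submodule) ∨
         (∃ Q ∈ G3, S ⊆ (Finset.univ.filter fun i => P i = E2) ∪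
            (Finset.univ.filter fun i => P i = Q)) ∨
         (∃ Q ∈ G1, S ⊆ (Finset.univ.filter fun i => P i = E3) ∪
            (Finset.univ.filter fun i => P i = Q)))) := by
    intro S hS3
    constructor
    · intro hnle
      have hrk3 : finrank F ↥(⨆ i ∈ S, (P i).submodule) ≤ 2 := by
        by_contra hc
        push_neg at hc
        have hle3 : finrank F ↥(⨆ i ∈ S, (P i).submodule) ≤ 3 := by
          have := Submodule.finrank_le (⨆ i ∈ S, (P i).submodule)
          rwa [Module.finrank_fin_fun] at this
        have heq : (⨆ i ∈ S, (P i).submodule) = ⊤ :=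
          Submodule.eq_top_of_finrank_eq (by rw [Module.finrank_fin_fun]; omega)
        exact hnle (heq ▸ le_top)
      rcases Nat.lt_or_ge 2 (S.image P).card with hT | hT
      · -- at least three distinct points: the span is the line E2E3
        obtain ⟨a, b, c, ha, hb, hc, hab, hac, hbc⟩ := Finset.two_lt_card_iff.mp hT
        obtain ⟨ia, hiaS, hPa⟩ := Finset.mem_image.mp ha
        obtain ⟨ib, hibS, hPb⟩ := Finset.mem_image.mp hb
        obtain ⟨ic, hicS, hPc⟩ := Finset.mem_image.mp hc
        have hale : a.submodule ≤ ⨆ i ∈ S, (P i).submodule := hPa ▸ hle_span S ia hiaS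
        have hble : b.submodule ≤ ⨆ i ∈ S, (P i).submodule := hPb ▸ hle_span S ib hibS
        have hcle : c.submodule ≤ ⨆ i ∈ S, (P i).submodule := hPc ▸ hle_span S ic hicS
        have hrk : finrank F ↥(⨆ i ∈ S, (P i).submodule) = 2 := by
          refine le_antisymm hrk3 ?_
          have hm := Submodule.finrank_mono (sup_le hale hble)
          rwa [sup_rank_two hab] at hm
        have hWcases : (⨆ i ∈ S, (P i).submodule) = E1.submodule ⊔ E2.submodule ∨
            (⨆ i ∈ S, (P i).submodule) = E2.submodule ⊔ E3.submodule ∨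
            (⨆ i ∈ S, (P i).submodule) = E3.submodule ⊔ E1.submodule := by
          by_contra hcc
          push_neg at hcc
          have hsec := h.secant _ hrk hcc.1 hcc.2.1 hcc.2.2
          have hsub3 : ({a, b, c} : Finset (Pt F)) ⊆
              (({E1,E2,E3} ∪ G1 ∪ G2 ∪ G3 : Finset (Pt F)).filter
                fun Q => Q.submodule ≤ ⨆ i ∈ S, (P i).submodule) := by
            intro q hq
            simp only [Finset.mem_insert, Finset.mem_singleton] at hq
            rcases hq with rfl | rfl | rfl
            · exact Finset.mem_filter.mpr ⟨hPa ▸ hrange ia, hale⟩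
            · exact Finset.mem_filter.mpr ⟨hPb ▸ hrange ib, hble⟩
            · exact Finset.mem_filter.mpr ⟨hPc ▸ hrange ic, hcle⟩
          have hc3 : ({a, b, c} : Finset (Pt F)).card = 3 := by
            rw [Finset.card_insert_of_notMem, Finset.card_insert_of_notMem,
              Finset.card_singleton]
            · simpa using hbc
            · simp only [Finset.mem_insert, Finset.mem_singleton]
              push_neg
              exact ⟨hab, hac⟩
          have h1 := Finset.card_le_card hsub3
          rw [hc3] at h1
          exact absurd (le_trans h1 hsec) (by norm_num)
        rcases hWcases with hW | hW | hW
        · exact absurd (by rw [hW]; exact le_sup_left) hnle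
        · left
          intro i hiS
          refine Finset.mem_filter.mpr ⟨Finset.mem_univ _, ?_⟩
          have := hle_span S i hiS
          rwa [hW] at this
        · exact absurd (by rw [hW]; exact le_sup_right) hnle
      · -- at most two distinct points
        have hSne : 0 < S.card := by omega
        have hone : (S.image P).Nonempty := Finset.Nonempty.image (Finset.card_pos.mp hSne) P
        have hTpos : 0 < (S.image P).card := Finset.card_pos.mpr hone
        rcases (by omega : (S.image P).card = 1 ∨ (S.image P).card = 2) with h1 | h2
        · -- one point
          obtain ⟨Q, hQ⟩ := Finset.card_eq_one.mp h1
          have hall : ∀ i ∈ S, P i = Q := by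
            intro i hi
            have : P i ∈ S.image P := Finset.mem_image_of_mem P hi
            rw [hQ] at this
            simpa using this
          obtain ⟨i0, hi0⟩ := Finset.card_pos.mp hSne
          have hQn1 : Q ≠ E1 := by
            intro hQE
            exact hnle (by rw [← hQE, ← hall i0 hi0]; exact hle_span S i0 hi0)
          have hQm := hmemOm i0
          rw [hall i0 hi0] at hQm
          have hGcase : ∀ hQG : Q ∈ G1 ∪ G2 ∪ G3, False := by
            intro hQG
            have hsc : S ⊆ Finset.univ.filter (fun i => P i = Q) := by
              intro i hi
              simp [hall i hi]
            have := Finset.card_le_card hsc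
            rw [hmultN Q hQG] at this
            omega
          rcases hQm with h' | h' | h' | h' | h' | h'
          · exact absurd h' hQn1
          · left
            intro i hiS
            exact Finset.mem_filter.mpr ⟨Finset.mem_univ _,
              by rw [hall i hiS, h']; exact le_sup_left⟩
          · left
            intro i hiS
            exact Finset.mem_filter.mpr ⟨Finset.mem_univ _,
              by rw [hall i hiS, h']; exact le_sup_right⟩
          · exact absurd (by simp [Finset.mem_union, h'] :
              Q ∈ G1 ∪ G2 ∪ G3) (fun hh => hGcase hh)
          · exact absurd (by simp [Finset.mem_union, h'] :
              Q ∈ G1 ∪ G2 ∪ G3) (fun hh => hGcase hh)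
          · exact absurd (by simp [Finset.mem_union, h'] :
              Q ∈ G1 ∪ G2 ∪ G3) (fun hh => hGcase hh)
        · -- exactly two points
          obtain ⟨Q, R, hQR, hQReq⟩ := Finset.card_eq_two.mp h2
          have hor : ∀ i ∈ S, P i = Q ∨ P i = R := by
            intro i hi
            have : P i ∈ S.image P := Finset.mem_image_of_mem P hi
            rw [hQReq] at this
            simpa using this
          have hQS : ∃ i ∈ S, P i = Q := by
            have : Q ∈ S.image P := by rw [hQReq]; simp
            simpa using Finset.mem_image.mp this
          have hRS : ∃ i ∈ S, P i = R := by
            have : R ∈ S.image P := by rw [hQReq]; simp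
            simpa using Finset.mem_image.mp this
          obtain ⟨iQ, hiQS, hPiQ⟩ := hQS
          obtain ⟨iR, hiRS, hPiR⟩ := hRS
          have hQn1 : Q ≠ E1 := fun hq =>
            hnle (by rw [← hq, ← hPiQ]; exact hle_span S iQ hiQS)
          have hRn1 : R ≠ E1 := fun hq =>
            hnle (by rw [← hq, ← hPiR]; exact hle_span S iR hiRS)
          have hQRnle : ¬ E1.submodule ≤ Q.submodule ⊔ R.submodule := fun hle =>
            hnle (le_trans hle (sup_le (hPiQ ▸ hle_span S iQ hiQS)
              (hPiR ▸ hle_span S iR hiRS)))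
          have hcount : ∀ A B : Pt F, (∀ i ∈ S, P i = A ∨ P i = B) →
              S.card ≤ (Finset.univ.filter fun i => P i = A).card +
                (Finset.univ.filter fun i => P i = B).card := by
            intro A B horAB
            refine le_trans (Finset.card_le_card ?_) (Finset.card_union_le _ _)
            intro i hi
            rcases horAB i hi with h' | h' <;>
              simp [Finset.mem_union, h']
          -- classification of the two points
          have hclass : ∀ (A : Pt F) (i : Fin (3*x+3*y)), i ∈ S → P i = A → A ≠ E1 →
              ((A = E2 ∨ A = E3 ∨ A ∈ G2) ∨ (A ∈ G1 ∨ A ∈ G3)) := by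
            intro A i hi hPi hAn1
            have := hmemOm i
            rw [hPi] at this
            rcases this with h' | h' | h' | h' | h' | h'
            · exact absurd h' hAn1
            · exact Or.inl (Or.inl h')
            · exact Or.inl (Or.inr (Or.inl h'))
            · exact Or.inr (Or.inl h')
            · exact Or.inl (Or.inr (Or.inr h'))
            · exact Or.inr (Or.inr h')
          have hmidle : ∀ A : Pt F, (A = E2 ∨ A = E3 ∨ A ∈ G2) →
              A.submodule ≤ E2.submodule ⊔ E3.submodule := by
            rintro A (rfl | rfl | h')
            · exact le_sup_left
            · exact le_sup_right
            · exact h.sub_G2 _ h'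
          have core : ∀ A B : Pt F, (∀ i ∈ S, P i = A ∨ P i = B) →
              ¬ E1.submodule ≤ A.submodule ⊔ B.submodule →
              (A = E2 ∨ A = E3 ∨ A ∈ G2) → (B ∈ G1 ∨ B ∈ G3) →
              ((∃ Q' ∈ G3, S ⊆ (Finset.univ.filter fun i => P i = E2) ∪
                  (Finset.univ.filter fun i => P i = Q')) ∨
               (∃ Q' ∈ G1, S ⊆ (Finset.univ.filter fun i => P i = E3) ∪
                  (Finset.univ.filter fun i => P i = Q'))) := by
            intro A B horAB hnleAB hAcl hBcl
            rcases hAcl with hA | hA | hA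
            · rcases hBcl with hB | hB
              · exfalso
                have hABne : A ≠ B := by rw [hA]; exact fun he => hE2G1 (he ▸ hB)
                have hsp := span_eq_line hABne hline12
                  (by rw [hA]; exact le_sup_right) (h.sub_G1 B hB)
                exact hnleAB (by rw [hsp]; exact le_sup_left)
              · left
                refine ⟨B, hB, fun i hi => ?_⟩
                rcases horAB i hi with h' | h'
                · simp [Finset.mem_union, h', hA]
                · simp [Finset.mem_union, h']
            · rcases hBcl with hB | hB
              · right
                refine ⟨B, hB, fun i hi => ?_⟩
                rcases horAB i hi with h' | h'
                · simp [Finset.mem_union, h', hA]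
                · simp [Finset.mem_union, h']
              · exfalso
                have hABne : A ≠ B := by rw [hA]; exact fun he => hE3G3 (he ▸ hB)
                have hsp := span_eq_line hABne hline31
                  (by rw [hA]; exact le_sup_left) (h.sub_G3 B hB)
                exact hnleAB (by rw [hsp]; exact le_sup_right)
            · exfalso
              have hA1 := hmultN A (by simp [Finset.mem_union, hA])
              have hB1 : (Finset.univ.filter fun i => P i = B).card = 1 := by
                rcases hBcl with hB | hB
                · exact hmultN B (by simp [Finset.mem_union, hB])
                · exact hmultN B (by simp [Finset.mem_union, hB])
              have := hcount A B horAB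
              omega
          rcases hclass Q iQ hiQS hPiQ hQn1 with hQc | hQc
          · rcases hclass R iR hiRS hPiR hRn1 with hRc | hRc
            · left
              intro i hiS
              refine Finset.mem_filter.mpr ⟨Finset.mem_univ _, ?_⟩
              rcases hor i hiS with h' | h'
              · rw [h']; exact hmidle Q hQc
              · rw [h']; exact hmidle R hRc
            · exact Or.inr (core Q R hor hQRnle hQc hRc)
          · rcases hclass R iR hiRS hPiR hRn1 with hRc | hRc
            · refine Or.inr (core R Q (fun i hi => (hor i hi).symm) ?_ hRc hQc)
              rw [sup_comm]
              exact hQRnle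
            · exfalso
              have hQ1 : (Finset.univ.filter fun i => P i = Q).card = 1 := by
                rcases hQc with hB | hB
                · exact hmultN Q (by simp [Finset.mem_union, hB])
                · exact hmultN Q (by simp [Finset.mem_union, hB])
              have hR1 : (Finset.univ.filter fun i => P i = R).card = 1 := by
                rcases hRc with hB | hB
                · exact hmultN R (by simp [Finset.mem_union, hB])
                · exact hmultN R (by simp [Finset.mem_union, hB])
              have := hcount Q R hor
              omega
    · rintro (hL | ⟨Q, hQ, hsub⟩ | ⟨Q, hQ, hsub⟩) hle
      · exact hnotmid (le_trans hle
          (hspan_le S _ (fun i hi => (Finset.mem_filter.mp (hL hi)).2)))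
      · have hsp : (⨆ i ∈ S, (P i).submodule) ≤ E2.submodule ⊔ Q.submodule := by
          refine hspan_le S _ (fun i hi => ?_)
          rcases Finset.mem_union.mp (hsub hi) with h' | h'
          · rw [(Finset.mem_filter.mp h').2]; exact le_sup_left
          · rw [(Finset.mem_filter.mp h').2]; exact le_sup_right
        have hE1le : E1.submodule ≤ E2.submodule ⊔ Q.submodule := le_trans hle hsp
        have heq : E1.submodule ⊔ E2.submodule = E2.submodule ⊔ Q.submodule :=
          Submodule.eq_of_le_of_finrank_le (sup_le hE1le le_sup_left)
            (by rw [hline12]; exact sup_le_two E2 Q)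
        have hQle12 : Q.submodule ≤ E1.submodule ⊔ E2.submodule := by
          rw [heq]; exact le_sup_right
        have hQE1 : Q = E1 := pt_on_two_lines hline12 hline31 hl12_31 le_sup_left
          le_sup_right hQle12 (h.sub_G3 Q hQ)
        exact hE1G3 (hQE1 ▸ hQ)
      · have hsp : (⨆ i ∈ S, (P i).submodule) ≤ E3.submodule ⊔ Q.submodule := by
          refine hspan_le S _ (fun i hi => ?_)
          rcases Finset.mem_union.mp (hsub hi) with h' | h'
          · rw [(Finset.mem_filter.mp h').2]; exact le_sup_left
          · rw [(Finset.mem_filter.mp h').2]; exact le_sup_right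
        have hE1le : E1.submodule ≤ E3.submodule ⊔ Q.submodule := le_trans hle hsp
        have heq : E3.submodule ⊔ E1.submodule = E3.submodule ⊔ Q.submodule :=
          Submodule.eq_of_le_of_finrank_le (sup_le le_sup_left hE1le)
            (by rw [hline31]; exact sup_le_two E3 Q)
        have hQle31 : Q.submodule ≤ E3.submodule ⊔ E1.submodule := by
          rw [heq]; exact le_sup_right
        have hQE1 : Q = E1 := pt_on_two_lines hline31 hline12 hl12_31.symm le_sup_right
          le_sup_left hQle31 (h.sub_G1 Q hQ)
        exact hE1G1 (hQE1 ▸ hQ)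
  -- 6. counting
  refine ⟨?_, ?_, ?_, ?_⟩
  · -- s = 1
    unfold alphaFam
    have hfe : ((Finset.univ : Finset (Fin (3*x+3*y))).powersetCard 1).filter
        (fun S : Finset (Fin (3*x+3*y)) => E1.submodule ≤ ⨆ i ∈ S, (P i).submodule) =
        (Finset.univ.filter fun i => P i = E1).image (fun i => {i}) := by
      ext S
      simp only [Finset.mem_filter, Finset.mem_powersetCard, Finset.mem_image,
        Finset.mem_univ, true_and]
      constructor
      · rintro ⟨⟨hsub, hc1⟩, hle⟩
        obtain ⟨i, rfl⟩ := Finset.card_eq_one.mp hc1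
        exact ⟨i, (char1 i).mp hle, rfl⟩
      · rintro ⟨i, hPi, rfl⟩
        exact ⟨⟨Finset.subset_univ _, Finset.card_singleton i⟩, (char1 i).mpr hPi⟩
    rw [hfe, Finset.card_image_of_injective _ Finset.singleton_injective, cI1]
  · -- s = 2
    unfold alphaFam
    have hsplit : ((Finset.univ : Finset (Fin (3*x+3*y))).powersetCard 2).filter
        (fun S => E1.submodule ≤ ⨆ i ∈ S, (P i).submodule) =
        ((Finset.univ : Finset (Fin (3*x+3*y))).powersetCard 2).filter
          (fun S => (∃ i ∈ S, P i = E1) ∨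
            (S ⊆ Finset.univ.filter (fun i =>
              (P i).submodule ≤ E1.submodule ⊔ E2.submodule ∧ P i ≠ E1) ∧
             ¬ S ⊆ Finset.univ.filter (fun i => P i = E2)) ∨
            (S ⊆ Finset.univ.filter (fun i =>
              (P i).submodule ≤ E3.submodule ⊔ E1.submodule ∧ P i ≠ E1) ∧
             ¬ S ⊆ Finset.univ.filter (fun i => P i = E3))) := by
      apply Finset.filter_congr
      intro S hS
      have hc := char2 S (Finset.mem_powersetCard.mp hS).2
      simp only [hc]
    rw [hsplit, Finset.filter_or, Finset.filter_or]
    have hdBC : Disjoint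
        (((Finset.univ : Finset (Fin (3*x+3*y))).powersetCard 2).filter
          (fun S => S ⊆ Finset.univ.filter (fun i =>
              (P i).submodule ≤ E1.submodule ⊔ E2.submodule ∧ P i ≠ E1) ∧
             ¬ S ⊆ Finset.univ.filter (fun i => P i = E2)))
        (((Finset.univ : Finset (Fin (3*x+3*y))).powersetCard 2).filter
          (fun S => S ⊆ Finset.univ.filter (fun i =>
              (P i).submodule ≤ E3.submodule ⊔ E1.submodule ∧ P i ≠ E1) ∧
             ¬ S ⊆ Finset.univ.filter (fun i => P i = E3))) := by
      rw [Finset.disjoint_left]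
      intro S hSB hSC
      obtain ⟨hSpc, hB1, _⟩ := Finset.mem_filter.mp hSB
      obtain ⟨_, hC1, _⟩ := Finset.mem_filter.mp hSC
      have hc2 := (Finset.mem_powersetCard.mp hSpc).2
      obtain ⟨i, hiS⟩ := Finset.card_pos.mp (by omega : 0 < S.card)
      have hi12 := (Finset.mem_filter.mp (hB1 hiS)).2
      have hi31 := (Finset.mem_filter.mp (hC1 hiS)).2
      exact hi12.2 (pt_on_two_lines hline12 hline31 hl12_31 le_sup_left le_sup_right
        hi12.1 hi31.1)
    have hdAB : Disjoint
        (((Finset.univ : Finset (Fin (3*x+3*y))).powersetCard 2).filter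
          (fun S => ∃ i ∈ S, P i = E1))
        ((((Finset.univ : Finset (Fin (3*x+3*y))).powersetCard 2).filter
          (fun S => S ⊆ Finset.univ.filter (fun i =>
              (P i).submodule ≤ E1.submodule ⊔ E2.submodule ∧ P i ≠ E1) ∧
             ¬ S ⊆ Finset.univ.filter (fun i => P i = E2))) ∪
         (((Finset.univ : Finset (Fin (3*x+3*y))).powersetCard 2).filter
          (fun S => S ⊆ Finset.univ.filter (fun i =>
              (P i).submodule ≤ E3.submodule ⊔ E1.submodule ∧ P i ≠ E1) ∧
             ¬ S ⊆ Finset.univ.filter (fun i => P i = E3)))) := by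
      rw [Finset.disjoint_left]
      intro S hSA hSBC
      obtain ⟨_, i, hiS, hPi⟩ := Finset.mem_filter.mp hSA
      rcases Finset.mem_union.mp hSBC with hS' | hS'
      · exact (Finset.mem_filter.mp ((Finset.mem_filter.mp hS').2.1 hiS)).2.2 hPi
      · exact (Finset.mem_filter.mp ((Finset.mem_filter.mp hS').2.1 hiS)).2.2 hPi
    rw [Finset.card_union_of_disjoint hdAB, Finset.card_union_of_disjoint hdBC]
    -- card of the E1 part
    have hA1 : (((Finset.univ : Finset (Fin (3*x+3*y))).powersetCard 2).filter
          (fun S => ∃ i ∈ S, P i = E1)).card +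
        (((Finset.univ : Finset (Fin (3*x+3*y))).powersetCard 2).filter
          (fun S => ¬ ∃ i ∈ S, P i = E1)).card = (3*x+3*y).choose 2 := by
      rw [Finset.card_filter_add_card_filter_not, Finset.card_powersetCard]
      simp
    have hA2 : (((Finset.univ : Finset (Fin (3*x+3*y))).powersetCard 2).filter
          (fun S => ¬ ∃ i ∈ S, P i = E1)).card = (3*x+2*y).choose 2 := by
      have he : (((Finset.univ : Finset (Fin (3*x+3*y))).powersetCard 2).filter
          (fun S => ¬ ∃ i ∈ S, P i = E1)) =
          ((Finset.univ \ (Finset.univ.filter fun i => P i = E1)).powersetCard 2) := by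
        ext S
        simp only [Finset.mem_filter, Finset.mem_powersetCard, Finset.subset_univ, true_and,
          not_exists]
        constructor
        · rintro ⟨hc, hne⟩
          refine ⟨fun i hi => Finset.mem_sdiff.mpr ⟨Finset.mem_univ _, ?_⟩, hc⟩
          simp only [Finset.mem_filter, Finset.mem_univ, true_and]
          exact fun hPi => hne i ⟨hi, hPi⟩
        · rintro ⟨hsub, hc⟩
          refine ⟨hc, fun i hi => ?_⟩
          have hm := Finset.mem_sdiff.mp (hsub hi.1)
          simp only [Finset.mem_filter, Finset.mem_univ, true_and] at hm
          exact hm hi.2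
      rw [he, Finset.card_powersetCard, Finset.card_sdiff_of_subset (Finset.filter_subset _ _), cI1]
      congr 1
      simp
      omega
    -- card of the two line parts
    have hline_count : ∀ (Kf If : Finset (Fin (3*x+3*y))), If ⊆ Kf → Kf.card = y + x →
        If.card = y →
        ((((Finset.univ : Finset (Fin (3*x+3*y))).powersetCard 2).filter
          (fun S => S ⊆ Kf ∧ ¬ S ⊆ If)).card + y.choose 2 = (y+x).choose 2) := by
      intro Kf If hIK hcK hcI
      have he : (((Finset.univ : Finset (Fin (3*x+3*y))).powersetCard 2).filter
          (fun S => S ⊆ Kf ∧ ¬ S ⊆ If)) = (Kf.powersetCard 2).filter (fun S => ¬ S ⊆ If) := by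
        ext S
        simp only [Finset.mem_filter, Finset.mem_powersetCard, Finset.subset_univ, true_and]
        tauto
      have he2 : (Kf.powersetCard 2).filter (fun S => S ⊆ If) = If.powersetCard 2 := by
        ext S
        simp only [Finset.mem_filter, Finset.mem_powersetCard]
        constructor
        · rintro ⟨⟨_, hc⟩, hsub⟩
          exact ⟨hsub, hc⟩
        · rintro ⟨hsub, hc⟩
          exact ⟨⟨hsub.trans hIK, hc⟩, hsub⟩
      have := Finset.card_filter_add_card_filter_not
        (s := Kf.powersetCard 2) (p := fun S => S ⊆ If)
      rw [he2, Finset.card_powersetCard, Finset.card_powersetCard, hcK, hcI] at this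
      rw [he]
      omega
    have hB := hline_count
      (Finset.univ.filter (fun i =>
        (P i).submodule ≤ E1.submodule ⊔ E2.submodule ∧ P i ≠ E1))
      (Finset.univ.filter (fun i => P i = E2))
      (fun i hi => by
        simp only [Finset.mem_filter, Finset.mem_univ, true_and] at hi ⊢
        exact (hK12mem i).mpr (Or.inl hi))
      cK12 cI2
    have hC := hline_count
      (Finset.univ.filter (fun i =>
        (P i).submodule ≤ E3.submodule ⊔ E1.submodule ∧ P i ≠ E1))
      (Finset.univ.filter (fun i => P i = E3))
      (fun i hi => by
        simp only [Finset.mem_filter, Finset.mem_univ, true_and] at hi ⊢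
        exact (hK31mem i).mpr (Or.inl hi))
      cK31 cI3
    -- final arithmetic
    have e1 : (3*x+3*y).choose 2 = y.choose 2 + y * (3*x+2*y) + (3*x+2*y).choose 2 := by
      rw [show 3*x+3*y = y + (3*x+2*y) by ring, choose2_add]
    have e2 : (y+x).choose 2 = y.choose 2 + y * x + x.choose 2 := by
      rw [choose2_add]
    have e3' : y * (y-1) / 2 = y.choose 2 := (Nat.choose_two_right y).symm
    rw [e3']
    set a1 := (((Finset.univ : Finset (Fin (3*x+3*y))).powersetCard 2).filter
          (fun S => ∃ i ∈ S, P i = E1)).card with ha1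
    set c2y := y.choose 2 with hc2y
    set c2x := x.choose 2 with hc2x
    set pxy := y * x with hpxy
    set pyn := y * (3*x+2*y) with hpyn
    have hxy' : x * y = pxy := by rw [hpxy]; ring
    rw [hxy']
    omega

  · -- 3 ≤ s ≤ x + 2y
    intro s hs3 hsle
    unfold alphaFam
    have hIL2 : ∀ i : Fin (3*x+3*y), P i = E2 →
        i ∈ Finset.univ.filter (fun i => (P i).submodule ≤ E2.submodule ⊔ E3.submodule) :=
      fun i hi => Finset.mem_filter.mpr ⟨Finset.mem_univ _, by rw [hi]; exact le_sup_left⟩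
    have hIL3 : ∀ i : Fin (3*x+3*y), P i = E3 →
        i ∈ Finset.univ.filter (fun i => (P i).submodule ≤ E2.submodule ⊔ E3.submodule) :=
      fun i hi => Finset.mem_filter.mpr ⟨Finset.mem_univ _, by rw [hi]; exact le_sup_right⟩
    have key : (((Finset.univ : Finset (Fin (3*x+3*y))).powersetCard s).filter
          (fun S => E1.submodule ≤ ⨆ i ∈ S, (P i).submodule)).card +
        (((Finset.univ : Finset (Fin (3*x+3*y))).powersetCard s).filter
          (fun S => ¬ E1.submodule ≤ ⨆ i ∈ S, (P i).submodule)).card = (3*x+3*y).choose s := by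
      rw [Finset.card_filter_add_card_filter_not, Finset.card_powersetCard]
      simp
    have hnegsplit : (((Finset.univ : Finset (Fin (3*x+3*y))).powersetCard s).filter
          (fun S => ¬ E1.submodule ≤ ⨆ i ∈ S, (P i).submodule)) =
        ((Finset.univ : Finset (Fin (3*x+3*y))).powersetCard s).filter
          (fun S => S ⊆ Finset.univ.filter
            (fun i => (P i).submodule ≤ E2.submodule ⊔ E3.submodule)) ∪
        ((Finset.univ : Finset (Fin (3*x+3*y))).powersetCard s).filter
          (fun S => (∃ Q ∈ G3, S ⊆ (Finset.univ.filter fun i => P i = E2) ∪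
              (Finset.univ.filter fun i => P i = Q)) ∧
            ¬ S ⊆ Finset.univ.filter
              (fun i => (P i).submodule ≤ E2.submodule ⊔ E3.submodule)) ∪
        ((Finset.univ : Finset (Fin (3*x+3*y))).powersetCard s).filter
          (fun S => (∃ Q ∈ G1, S ⊆ (Finset.univ.filter fun i => P i = E3) ∪
              (Finset.univ.filter fun i => P i = Q)) ∧
            ¬ S ⊆ Finset.univ.filter
              (fun i => (P i).submodule ≤ E2.submodule ⊔ E3.submodule)) := by
      rw [← Finset.filter_or, ← Finset.filter_or]
      apply Finset.filter_congr
      intro S hS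
      have hcS := (Finset.mem_powersetCard.mp hS).2
      rw [charBig S (by omega)]
      constructor
      · rintro (hA | hB | hC)
        · exact Or.inl (Or.inl hA)
        · by_cases hL : S ⊆ Finset.univ.filter
              (fun i => (P i).submodule ≤ E2.submodule ⊔ E3.submodule)
          · exact Or.inl (Or.inl hL)
          · exact Or.inl (Or.inr ⟨hB, hL⟩)
        · by_cases hL : S ⊆ Finset.univ.filter
              (fun i => (P i).submodule ≤ E2.submodule ⊔ E3.submodule)
          · exact Or.inl (Or.inl hL)
          · exact Or.inr ⟨hC, hL⟩
      · rintro ((hA | ⟨hB, _⟩) | ⟨hC, _⟩)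
        · exact Or.inl hA
        · exact Or.inr (Or.inl hB)
        · exact Or.inr (Or.inr hC)
    have hdAB : Disjoint
        (((Finset.univ : Finset (Fin (3*x+3*y))).powersetCard s).filter
          (fun S => S ⊆ Finset.univ.filter
            (fun i => (P i).submodule ≤ E2.submodule ⊔ E3.submodule)))
        (((Finset.univ : Finset (Fin (3*x+3*y))).powersetCard s).filter
          (fun S => (∃ Q ∈ G3, S ⊆ (Finset.univ.filter fun i => P i = E2) ∪
              (Finset.univ.filter fun i => P i = Q)) ∧
            ¬ S ⊆ Finset.univ.filter
              (fun i => (P i).submodule ≤ E2.submodule ⊔ E3.submodule))) := by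
      rw [Finset.disjoint_left]
      intro S hA hB
      exact (Finset.mem_filter.mp hB).2.2 (Finset.mem_filter.mp hA).2
    have hdABC : Disjoint
        ((((Finset.univ : Finset (Fin (3*x+3*y))).powersetCard s).filter
          (fun S => S ⊆ Finset.univ.filter
            (fun i => (P i).submodule ≤ E2.submodule ⊔ E3.submodule))) ∪
         (((Finset.univ : Finset (Fin (3*x+3*y))).powersetCard s).filter
          (fun S => (∃ Q ∈ G3, S ⊆ (Finset.univ.filter fun i => P i = E2) ∪
              (Finset.univ.filter fun i => P i = Q)) ∧
            ¬ S ⊆ Finset.univ.filter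
              (fun i => (P i).submodule ≤ E2.submodule ⊔ E3.submodule))))
        (((Finset.univ : Finset (Fin (3*x+3*y))).powersetCard s).filter
          (fun S => (∃ Q ∈ G1, S ⊆ (Finset.univ.filter fun i => P i = E3) ∪
              (Finset.univ.filter fun i => P i = Q)) ∧
            ¬ S ⊆ Finset.univ.filter
              (fun i => (P i).submodule ≤ E2.submodule ⊔ E3.submodule))) := by
      rw [Finset.disjoint_left]
      intro S hS hC
      obtain ⟨_, ⟨Q', hQ', hsub'⟩, hnL⟩ := Finset.mem_filter.mp hC
      obtain ⟨i, hiS, hiL⟩ := Finset.not_subset.mp hnL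
      have hPiQ' : P i = Q' := by
        rcases Finset.mem_union.mp (hsub' hiS) with h' | h'
        · exact absurd (hIL3 i (Finset.mem_filter.mp h').2) hiL
        · exact (Finset.mem_filter.mp h').2
      rcases Finset.mem_union.mp hS with hA | hB
      · exact hiL ((Finset.mem_filter.mp hA).2 hiS)
      · obtain ⟨_, ⟨Q, hQ, hsub⟩, _⟩ := Finset.mem_filter.mp hB
        have hPiQ : P i = Q := by
          rcases Finset.mem_union.mp (hsub hiS) with h' | h'
          · exact absurd (hIL2 i (Finset.mem_filter.mp h').2) hiL
          · exact (Finset.mem_filter.mp h').2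
        exact dG13 Q' hQ' (by rw [← hPiQ', hPiQ]; exact hQ)
    have hAcard : (((Finset.univ : Finset (Fin (3*x+3*y))).powersetCard s).filter
          (fun S => S ⊆ Finset.univ.filter
            (fun i => (P i).submodule ≤ E2.submodule ⊔ E3.submodule))).card =
        (x + 2*y).choose s := by
      have he : (((Finset.univ : Finset (Fin (3*x+3*y))).powersetCard s).filter
          (fun S => S ⊆ Finset.univ.filter
            (fun i => (P i).submodule ≤ E2.submodule ⊔ E3.submodule))) =
          (Finset.univ.filter
            (fun i => (P i).submodule ≤ E2.submodule ⊔ E3.submodule)).powersetCard s := by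
        ext S
        simp only [Finset.mem_filter, Finset.mem_powersetCard, Finset.subset_univ, true_and]
        tauto
      rw [he, Finset.card_powersetCard, cL]
    have hfam : ∀ (E' : Pt F) (G' : Finset (Pt F)),
        (Finset.univ.filter fun i => P i = E').card = y →
        G' ⊆ G1 ∪ G2 ∪ G3 → (∀ Q ∈ G', Q ≠ E') →
        (∀ i : Fin (3*x+3*y), P i = E' → i ∈ Finset.univ.filter
          (fun i => (P i).submodule ≤ E2.submodule ⊔ E3.submodule)) →
        (∀ Q ∈ G', ∀ i : Fin (3*x+3*y), P i = Q → i ∉ Finset.univ.filter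
          (fun i => (P i).submodule ≤ E2.submodule ⊔ E3.submodule)) →
        (((Finset.univ : Finset (Fin (3*x+3*y))).powersetCard s).filter
          (fun S => (∃ Q ∈ G', S ⊆ (Finset.univ.filter fun i => P i = E') ∪
              (Finset.univ.filter fun i => P i = Q)) ∧
            ¬ S ⊆ Finset.univ.filter
              (fun i => (P i).submodule ≤ E2.submodule ⊔ E3.submodule))).card =
        G'.card * y.choose (s-1) := by
      intro E' G' hcIE hGsub hneE hsubL hLnot
      have hBeq : (((Finset.univ : Finset (Fin (3*x+3*y))).powersetCard s).filter
          (fun S => (∃ Q ∈ G', S ⊆ (Finset.univ.filter fun i => P i = E') ∪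
              (Finset.univ.filter fun i => P i = Q)) ∧
            ¬ S ⊆ Finset.univ.filter
              (fun i => (P i).submodule ≤ E2.submodule ⊔ E3.submodule))) =
          G'.biUnion (fun Q => ((Finset.univ : Finset (Fin (3*x+3*y))).powersetCard s).filter
            (fun S => S ⊆ (Finset.univ.filter fun i => P i = E') ∪
              (Finset.univ.filter fun i => P i = Q) ∧
              ¬ S ⊆ (Finset.univ.filter fun i => P i = E'))) := by
        ext S
        simp only [Finset.mem_filter, Finset.mem_biUnion]
        constructor
        · rintro ⟨hSpc, ⟨Q, hQ, hsub⟩, hnL⟩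
          refine ⟨Q, hQ, hSpc, hsub, fun hI => hnL (fun i hi => hsubL i
            (Finset.mem_filter.mp (hI hi)).2)⟩
        · rintro ⟨Q, hQ, hSpc, hsub, hnI⟩
          obtain ⟨i, hiS, hiI⟩ := Finset.not_subset.mp hnI
          have hPiQ : P i = Q := by
            rcases Finset.mem_union.mp (hsub hiS) with h' | h'
            · exact absurd h' hiI
            · exact (Finset.mem_filter.mp h').2
          exact ⟨hSpc, ⟨Q, hQ, hsub⟩, fun hc => hLnot Q hQ i hPiQ (hc hiS)⟩
      have hdisj : ∀ Q1 ∈ G', ∀ Q2 ∈ G', Q1 ≠ Q2 → Disjoint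
          (((Finset.univ : Finset (Fin (3*x+3*y))).powersetCard s).filter
            (fun S => S ⊆ (Finset.univ.filter fun i => P i = E') ∪
              (Finset.univ.filter fun i => P i = Q1) ∧
              ¬ S ⊆ (Finset.univ.filter fun i => P i = E')))
          (((Finset.univ : Finset (Fin (3*x+3*y))).powersetCard s).filter
            (fun S => S ⊆ (Finset.univ.filter fun i => P i = E') ∪
              (Finset.univ.filter fun i => P i = Q2) ∧
              ¬ S ⊆ (Finset.univ.filter fun i => P i = E'))) := by
        intro Q1 hQ1 Q2 hQ2 hne12'
        rw [Finset.disjoint_left]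
        intro S h1' h2'
        obtain ⟨_, hsub1, hnI⟩ := Finset.mem_filter.mp h1'
        obtain ⟨_, hsub2, _⟩ := Finset.mem_filter.mp h2'
        obtain ⟨i, hiS, hiI⟩ := Finset.not_subset.mp hnI
        have hP1 : P i = Q1 := by
          rcases Finset.mem_union.mp (hsub1 hiS) with h' | h'
          · exact absurd h' hiI
          · exact (Finset.mem_filter.mp h').2
        have hP2 : P i = Q2 := by
          rcases Finset.mem_union.mp (hsub2 hiS) with h' | h'
          · exact absurd h' hiI
          · exact (Finset.mem_filter.mp h').2
        exact hne12' (hP1 ▸ hP2 ▸ rfl)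
      rw [hBeq, Finset.card_biUnion hdisj]
      have hinner : ∀ Q ∈ G', (((Finset.univ : Finset (Fin (3*x+3*y))).powersetCard s).filter
            (fun S => S ⊆ (Finset.univ.filter fun i => P i = E') ∪
              (Finset.univ.filter fun i => P i = Q) ∧
              ¬ S ⊆ (Finset.univ.filter fun i => P i = E'))).card = y.choose (s-1) := by
        intro Q hQ
        obtain ⟨iq, hiqeq⟩ := Finset.card_eq_one.mp (hmultN Q (hGsub hQ))
        have hiqP : P iq = Q := by
          have : iq ∈ Finset.univ.filter (fun i => P i = Q) := by
            rw [hiqeq]; exact Finset.mem_singleton_self iq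
          exact (Finset.mem_filter.mp this).2
        have hiqnot : iq ∉ Finset.univ.filter (fun i => P i = E') := by
          simp only [Finset.mem_filter, Finset.mem_univ, true_and, hiqP]
          exact hneE Q hQ
        have hinj : Set.InjOn (insert iq)
            (((Finset.univ.filter fun i => P i = E').powersetCard (s-1) :
              Finset (Finset (Fin (3*x+3*y)))) : Set (Finset (Fin (3*x+3*y)))) := by
          intro S1 h1' S2 h2' he
          have h1n : iq ∉ S1 := fun hin => hiqnot
            ((Finset.mem_powersetCard.mp (Finset.mem_coe.mp h1')).1 hin)
          have h2n : iq ∉ S2 := fun hin => hiqnot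
            ((Finset.mem_powersetCard.mp (Finset.mem_coe.mp h2')).1 hin)
          rw [← Finset.erase_insert h1n, he, Finset.erase_insert h2n]
        have himg : (((Finset.univ : Finset (Fin (3*x+3*y))).powersetCard s).filter
            (fun S => S ⊆ (Finset.univ.filter fun i => P i = E') ∪
              (Finset.univ.filter fun i => P i = Q) ∧
              ¬ S ⊆ (Finset.univ.filter fun i => P i = E'))) =
            ((Finset.univ.filter fun i => P i = E').powersetCard (s-1)).image (insert iq) := by
          rw [hiqeq]
          ext S
          simp only [Finset.mem_filter, Finset.mem_powersetCard, Finset.subset_univ, true_and,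
            Finset.mem_image]
          constructor
          · rintro ⟨hsc, hsub, hnI⟩
            have hiqS : iq ∈ S := by
              obtain ⟨i, hiS, hinot⟩ := Finset.not_subset.mp hnI
              have hieq : i = iq := by
                rcases Finset.mem_union.mp (hsub hiS) with h' | h'
                · exact absurd h' hinot
                · simpa using h'
              exact hieq ▸ hiS
            refine ⟨S.erase iq, ⟨?_, ?_⟩, Finset.insert_erase hiqS⟩
            · intro j hj
              have hjS := Finset.mem_of_mem_erase hj
              have hjne := Finset.ne_of_mem_erase hj
              rcases Finset.mem_union.mp (hsub hjS) with h' | h'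
              · exact h'
              · exact absurd (by simpa using h') hjne
            · rw [Finset.card_erase_of_mem hiqS, hsc]
          · rintro ⟨S', ⟨hS'sub, hS'card⟩, rfl⟩
            have hiqS' : iq ∉ S' := fun hin => hiqnot (hS'sub hin)
            refine ⟨?_, ?_, ?_⟩
            · rw [Finset.card_insert_of_notMem hiqS', hS'card]
              omega
            · intro j hj
              rcases Finset.mem_insert.mp hj with rfl | hj'
              · exact Finset.mem_union_right _ (Finset.mem_singleton_self _)
              · exact Finset.mem_union_left _ (hS'sub hj')
            · intro hcon
              exact hiqnot (hcon (Finset.mem_insert_self _ _))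
        rw [himg, Finset.card_image_of_injOn hinj, Finset.card_powersetCard, hcIE]
      rw [Finset.sum_congr rfl hinner, Finset.sum_const, smul_eq_mul]
    have hBcard := hfam E2 G3 cI2
      (fun q hq => by simp [Finset.mem_union, hq])
      (fun Q hQ he => hE2G3 (he ▸ hQ))
      hIL2
      (fun Q hQ i hPi hmem => by
        have := (hLmem i).mp (Finset.mem_filter.mp hmem).2
        rcases this with h' | h' | h'
        · exact hE2G3 (by rw [← h', hPi]; exact hQ)
        · exact hE3G3 (by rw [← h', hPi]; exact hQ)
        · exact dG23 (P i) h' (hPi ▸ hQ))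
    have hCcard := hfam E3 G1 cI3
      (fun q hq => by simp [Finset.mem_union, hq])
      (fun Q hQ he => hE3G1 (he ▸ hQ))
      hIL3
      (fun Q hQ i hPi hmem => by
        have := (hLmem i).mp (Finset.mem_filter.mp hmem).2
        rcases this with h' | h' | h'
        · exact hE2G1 (by rw [← h', hPi]; exact hQ)
        · exact hE3G1 (by rw [← h', hPi]; exact hQ)
        · exact dG12 Q hQ (by rw [← hPi]; exact h'))
    rw [hnegsplit, Finset.card_union_of_disjoint hdABC, Finset.card_union_of_disjoint hdAB,
      hAcard, hBcard, hCcard, h.card_G3, h.card_G1] at key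
    exact count_final key
  · -- s > x + 2y
    intro s hslt hsle
    unfold alphaFam
    have hall : ∀ S ∈ (Finset.univ : Finset (Fin (3*x+3*y))).powersetCard s,
        E1.submodule ≤ ⨆ i ∈ S, (P i).submodule := by
      intro S hS
      have hcS := (Finset.mem_powersetCard.mp hS).2
      by_contra hnc'
      rcases (charBig S (by omega)).mp hnc' with hL | ⟨Q, hQ, hsub⟩ | ⟨Q, hQ, hsub⟩
      · have := Finset.card_le_card hL
        rw [cL, hcS] at this
        omega
      · have hc1 := hmultN Q (by simp [Finset.mem_union, hQ])
        have hle := Finset.card_le_card hsub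
        have hu := Finset.card_union_le (Finset.univ.filter fun i => P i = E2)
          (Finset.univ.filter fun i => P i = Q)
        rw [cI2, hc1] at hu
        omega
      · have hc1 := hmultN Q (by simp [Finset.mem_union, hQ])
        have hle := Finset.card_le_card hsub
        have hu := Finset.card_union_le (Finset.univ.filter fun i => P i = E3)
          (Finset.univ.filter fun i => P i = Q)
        rw [cI3, hc1] at hu
        omega
    rw [Finset.filter_true_of_mem hall, Finset.card_powersetCard]
    simp







set_option maxHeartbeats 10000000 in
/-- Recovery counts of a fundamental point for a balanced quasi-arc of weight
`x` in which each fundamental point appears with multiplicity `y`. -/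
theorem stmt11 {F : Type*} [Field F] {x y : ℕ} (hy : 1 ≤ y)
    {E1 E2 E3 : Projectivization F (Fin 3 → F)}
    {G1 G2 G3 : Finset (Projectivization F (Fin 3 → F))}
    (h : IsBalancedQuasiArc F x E1 E2 E3 G1 G2 G3)
    (P : Fin (3 * x + 3 * y) → Projectivization F (Fin 3 → F))
    (hmultF : ∀ E ∈ ({E1, E2, E3} : Finset (Projectivization F (Fin 3 → F))),
      (Finset.univ.filter fun i => P i = E).card = y)
    (hmultN : ∀ Q ∈ G1 ∪ G2 ∪ G3,
      (Finset.univ.filter fun i => P i = Q).card = 1)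
    (hrange : ∀ i, P i ∈ ({E1, E2, E3} ∪ G1 ∪ G2 ∪ G3 : Finset _))
    (E : Projectivization F (Fin 3 → F)) (hE : E = E1 ∨ E = E2 ∨ E = E3) :
    alphaFam P E 1 = y ∧
    alphaFam P E 2 =
      2 * (x * y + x.choose 2) + y * (3 * x + 2 * y) + y * (y - 1) / 2 ∧
    (∀ s, 3 ≤ s → s ≤ x + 2 * y →
      alphaFam P E s =
        (3 * x + 3 * y).choose s - (x + 2 * y).choose s - 2 * y.choose (s - 1) * x) ∧
    (∀ s, x + 2 * y < s → s ≤ 3 * x + 3 * y - 1 →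
      alphaFam P E s = (3 * x + 3 * y).choose s) := by
  have hperm2 : IsBalancedQuasiArc F x E2 E3 E1 G2 G3 G1 := by
    constructor
    · rintro ⟨W, hW, h2, h3, h1⟩
      exact h.not_collinear ⟨W, hW, h1, h2, h3⟩
    · exact h.card_G2
    · exact h.card_G3
    · exact h.card_G1
    · exact h.sub_G2
    · exact h.sub_G3
    · exact h.sub_G1
    · rw [show ({E2,E3,E1} ∪ G2 ∪ G3 ∪ G1 : Finset _) = {E1,E2,E3} ∪ G1 ∪ G2 ∪ G3 by
        ext q; simp only [Finset.mem_union, Finset.mem_insert, Finset.mem_singleton]; tauto]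
      exact h.card_total
    · intro W hW hn1 hn2 hn3
      rw [show ({E2,E3,E1} ∪ G2 ∪ G3 ∪ G1 : Finset _) = {E1,E2,E3} ∪ G1 ∪ G2 ∪ G3 by
        ext q; simp only [Finset.mem_union, Finset.mem_insert, Finset.mem_singleton]; tauto]
      exact h.secant W hW hn3 hn1 hn2
  have hperm3 : IsBalancedQuasiArc F x E3 E1 E2 G3 G1 G2 := by
    constructor
    · rintro ⟨W, hW, h3, h1, h2⟩
      exact h.not_collinear ⟨W, hW, h1, h2, h3⟩
    · exact h.card_G3
    · exact h.card_G1
    · exact h.card_G2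
    · exact h.sub_G3
    · exact h.sub_G1
    · exact h.sub_G2
    · rw [show ({E3,E1,E2} ∪ G3 ∪ G1 ∪ G2 : Finset _) = {E1,E2,E3} ∪ G1 ∪ G2 ∪ G3 by
        ext q; simp only [Finset.mem_union, Finset.mem_insert, Finset.mem_singleton]; tauto]
      exact h.card_total
    · intro W hW hn1 hn2 hn3
      rw [show ({E3,E1,E2} ∪ G3 ∪ G1 ∪ G2 : Finset _) = {E1,E2,E3} ∪ G1 ∪ G2 ∪ G3 by
        ext q; simp only [Finset.mem_union, Finset.mem_insert, Finset.mem_singleton]; tauto]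
      exact h.secant W hW hn2 hn3 hn1
  rcases hE with rfl | rfl | rfl
  · exact mainE1 hy h P hmultF hmultN hrange
  · refine mainE1 hy hperm2 P ?_ ?_ ?_
    · intro E hE
      refine hmultF E ?_
      simp only [Finset.mem_insert, Finset.mem_singleton] at hE ⊢
      tauto
    · intro Q hQ
      refine hmultN Q ?_
      simp only [Finset.mem_union] at hQ ⊢
      tauto
    · intro i
      have := hrange i
      simp only [Finset.mem_union, Finset.mem_insert, Finset.mem_singleton] at this ⊢
      tauto
  · refine mainE1 hy hperm3 P ?_ ?_ ?_
    · intro E hE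
      refine hmultF E ?_
      simp only [Finset.mem_insert, Finset.mem_singleton] at hE ⊢
      tauto
    · intro Q hQ
      refine hmultN Q ?_
      simp only [Finset.mem_union] at hQ ⊢
      tauto
    · intro i
      have := hrange i
      simp only [Finset.mem_union, Finset.mem_insert, Finset.mem_singleton] at this ⊢
      tauto
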